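/- For n ≥ 3, the function f on the vertices of S(K_n, 3) defined (with indices modulo n) by f(v_iv_jv_{i−1}) = 1 for all i,j, f(v_iv_jv_{i+1}) = 1 for all i and all j ∉ {i−1, i+1}, and f(v) = 0 otherwise, is an Italian dominating function of S(K_n, 3) of weight 2n(n − 1). Consequently γ_I(S(K_n,3)) ≤ 2n(n−1). -/

import Mathlib

open Finset
open scoped Classical

/-- An Italian dominating function: `f : V → {0,1,2}` such that every vertex with
value 0 has neighbours of total weight at least 2. -/
def IsIDF {V : Type*} [Fintype V] (G : SimpleGraph V) (f : V → ℕ) : Prop :=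
  (∀ v, f v ≤ 2) ∧
  ∀ v, f v = 0 → 2 ≤ ∑ u ∈ Finset.univ.filter fun u => G.Adj v u, f u

/-- The Italian domination number: minimum weight of an IDF. -/
noncomputable def italianDomNumber {V : Type*} [Fintype V] (G : SimpleGraph V) : ℕ :=
  sInf {w | ∃ f, IsIDF G f ∧ ∑ v, f v = w}

/-- A perfect Italian dominating function: every vertex with value 0 has neighbours
of total weight exactly 2. -/
def IsPIDF {V : Type*} [Fintype V] (G : SimpleGraph V) (f : V → ℕ) : Prop :=
  (∀ v, f v ≤ 2) ∧
  ∀ v, f v = 0 → (∑ u ∈ Finset.univ.filter fun u => G.Adj v u, f u) = 2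

/-- The perfect Italian domination number. -/
noncomputable def perfectItalianDomNumber {V : Type*} [Fintype V] (G : SimpleGraph V) : ℕ :=
  sInf {w | ∃ f, IsPIDF G f ∧ ∑ v, f v = w}

/-- The Sierpiński graph `S(K_n, t)` on words of length `t` over an alphabet of size `n`. -/
def sierpinskiGraph (n t : ℕ) : SimpleGraph (Fin t → Fin n) :=
  SimpleGraph.fromRel (fun u v => ∃ i : Fin t,
    (∀ j, j < i → u j = v j) ∧ u i ≠ v i ∧ ∀ j, i < j → u j = v i ∧ v j = u i)

namespace SierpHelp

variable {n : ℕ}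

def trip (x y z : Fin n) : Fin 3 → Fin n := ![x, y, z]

@[simp] lemma trip0 (x y z : Fin n) : trip x y z 0 = x := rfl
@[simp] lemma trip1 (x y z : Fin n) : trip x y z 1 = y := rfl
@[simp] lemma trip2 (x y z : Fin n) : trip x y z 2 = z := rfl

lemma eq_trip (w : Fin 3 → Fin n) : w = trip (w 0) (w 1) (w 2) := by
  funext j; fin_cases j <;> rfl

lemma trip_ne2 {x y z x' y' z' : Fin n} (h : z ≠ z') : trip x y z ≠ trip x' y' z' := by
  intro he; exact h (congrFun he 2)

lemma trip_ne1 {x y z x' y' z' : Fin n} (h : y ≠ y') : trip x y z ≠ trip x' y' z' := by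
  intro he; exact h (congrFun he 1)

lemma trip_ne0 {x y z x' y' z' : Fin n} (h : x ≠ x') : trip x y z ≠ trip x' y' z' := by
  intro he; exact h (congrFun he 0)

lemma adjA (a b c c' : Fin n) (h : c ≠ c') :
    (sierpinskiGraph n 3).Adj (trip a b c) (trip a b c') := by
  rw [sierpinskiGraph, SimpleGraph.fromRel_adj]
  refine ⟨trip_ne2 h, Or.inl ⟨2, ?_, h, ?_⟩⟩
  · intro j hj; fin_cases j <;> first | rfl | (exact absurd hj (by decide))
  · intro j hj; fin_cases j <;> exact absurd hj (by decide)

lemma adjB (a b c : Fin n) (h : b ≠ c) :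
    (sierpinskiGraph n 3).Adj (trip a b c) (trip a c b) := by
  rw [sierpinskiGraph, SimpleGraph.fromRel_adj]
  refine ⟨trip_ne1 h, Or.inl ⟨1, ?_, h, ?_⟩⟩
  · intro j hj; fin_cases j <;> first | rfl | (exact absurd hj (by decide))
  · intro j hj; fin_cases j <;> first | (exact absurd hj (by decide)) | exact ⟨rfl, rfl⟩

lemma adjC (a b : Fin n) (h : a ≠ b) :
    (sierpinskiGraph n 3).Adj (trip a b b) (trip b a a) := by
  rw [sierpinskiGraph, SimpleGraph.fromRel_adj]
  refine ⟨trip_ne0 h, Or.inl ⟨0, ?_, h, ?_⟩⟩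
  · intro j hj; fin_cases j <;> first | rfl | (exact absurd hj (by decide))
  · intro j hj; fin_cases j <;> first | (exact absurd hj (by decide)) | exact ⟨rfl, rfl⟩

lemma two_le_sum {V : Type*} [DecidableEq V] {s : Finset V} {f : V → ℕ} {u v : V}
    (hu : u ∈ s) (hv : v ∈ s) (huv : u ≠ v) (h1 : 1 ≤ f u) (h2 : 1 ≤ f v) :
    2 ≤ ∑ x ∈ s, f x := by
  calc 2 ≤ f u + f v := by omega
    _ = ∑ x ∈ ({u, v} : Finset V), f x := (Finset.sum_pair huv).symm
    _ ≤ ∑ x ∈ s, f x := Finset.sum_le_sum_of_subset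
        (by intro x hx; simp at hx; rcases hx with rfl|rfl <;> assumption)

theorem val_sub_one (h : 2 < n) (a : Fin n) :
    ((a - ⟨1, by omega⟩ : Fin n)).val = if a.val = 0 then n-1 else a.val - 1 := by
  rw [Fin.sub_def]; dsimp
  rcases Nat.eq_zero_or_pos a.val with h0 | h0
  · rw [h0]; simp [Nat.mod_eq_of_lt (by omega : n - 1 < n)]
  · have hne : a.val ≠ 0 := by omega
    have : n - 1 + a.val = (a.val - 1) + n := by omega
    rw [this, Nat.add_mod_right, Nat.mod_eq_of_lt (by omega), if_neg hne]

theorem val_add_one (h : 2 < n) (a : Fin n) :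
    ((a + ⟨1, by omega⟩ : Fin n)).val = if a.val = n-1 then 0 else a.val + 1 := by
  rw [Fin.add_def]; dsimp
  rcases eq_or_ne a.val (n-1) with h0 | h0
  · rw [h0]; have : n - 1 + 1 = n := by omega
    rw [this, Nat.mod_self, if_pos rfl]
  · rw [Nat.mod_eq_of_lt (by omega), if_neg h0]

theorem sub_ne_add (h : 2 < n) (a : Fin n) :
    (a - ⟨1, by omega⟩ : Fin n) ≠ a + ⟨1, by omega⟩ := by
  have h1 := val_sub_one h a; have h2 := val_add_one h a; have h3 := a.isLt
  intro he; rw [Fin.ext_iff, h1, h2] at he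
  split_ifs at he <;> omega

theorem add_sub_cancel'' (h : 2 < n) (a : Fin n) :
    (a + ⟨1, by omega⟩ : Fin n) - ⟨1, by omega⟩ = a := by
  have h1 := val_sub_one h (a + ⟨1, by omega⟩); have h2 := val_add_one h a
  have h3 := a.isLt
  rw [h2] at h1
  rw [Fin.ext_iff, h1]
  split_ifs <;> first | omega | simp_all

theorem ne_add_one (h : 2 < n) (a : Fin n) : a ≠ a + ⟨1, by omega⟩ := by
  have h2 := val_add_one h a; have h3 := a.isLt
  intro he; rw [Fin.ext_iff, h2] at he; split_ifs at he <;> omega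

end SierpHelp

open SierpHelp

theorem sierpinski_three_explicit_IDF (n : ℕ) (hn : 3 ≤ n) :
    ∃ f : (Fin 3 → Fin n) → ℕ,
      (∀ w : Fin 3 → Fin n,
        f w = if w 2 = w 0 - ⟨1, by omega⟩ ∨
                 (w 2 = w 0 + ⟨1, by omega⟩ ∧ w 1 ≠ w 0 - ⟨1, by omega⟩ ∧ w 1 ≠ w 0 + ⟨1, by omega⟩) then 1 else 0) ∧
      IsIDF (sierpinskiGraph n 3) f ∧
      (∑ w, f w) = 2 * n * (n - 1) ∧
      italianDomNumber (sierpinskiGraph n 3) ≤ 2 * n * (n - 1) := by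
  set p1 : Fin n := ⟨1, by omega⟩ with hp1
  set F : (Fin 3 → Fin n) → ℕ := fun w => if w 2 = w 0 - p1 ∨
      (w 2 = w 0 + p1 ∧ w 1 ≠ w 0 - p1 ∧ w 1 ≠ w 0 + p1) then 1 else 0 with hF
  have hft : ∀ x y z : Fin n, F (trip x y z) =
      if z = x - p1 ∨ (z = x + p1 ∧ y ≠ x - p1 ∧ y ≠ x + p1) then 1 else 0 := fun x y z => rfl
  have hIDF : IsIDF (sierpinskiGraph n 3) F := by
    constructor
    · intro v; rw [hF]; dsimp only; split <;> omega
    · intro w hw0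
      set a := w 0 with ha
      set b := w 1 with hb
      set c := w 2 with hc
      have hC : ¬ (c = a - p1 ∨ (c = a + p1 ∧ b ≠ a - p1 ∧ b ≠ a + p1)) := by
        intro hcond
        rw [hF] at hw0; dsimp only at hw0
        rw [if_pos hcond] at hw0; omega
      have hcd : c ≠ a - p1 := fun h => hC (Or.inl h)
      have hweq : w = trip a b c := eq_trip w
      rw [hweq]
      by_cases hQ : b ≠ a - p1 ∧ b ≠ a + p1
      · -- two clique neighbours
        have hce : c ≠ a + p1 := fun h => hC (Or.inr ⟨h, hQ⟩)
        refine two_le_sum (u := trip a b (a - p1)) (v := trip a b (a + p1))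
          (Finset.mem_filter.mpr ⟨Finset.mem_univ _, adjA a b c _ hcd⟩)
          (Finset.mem_filter.mpr ⟨Finset.mem_univ _, adjA a b c _ hce⟩)
          (trip_ne2 (sub_ne_add hn a)) ?_ ?_
        · rw [hft, if_pos (Or.inl rfl)]
        · rw [hft, if_pos (Or.inr ⟨rfl, hQ⟩)]
      · push_neg at hQ
        by_cases hbc : b = c
        · -- w = (a, a+1, a+1), use extreme neighbour
          have hbd : b ≠ a - p1 := fun h => hcd (hbc ▸ h)
          have hbe : b = a + p1 := by
            rcases Classical.em (b = a - p1) with h | h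
            · exact absurd h hbd
            · exact hQ h
          have hcE : c = a + p1 := hbc ▸ hbe
          have hane : a ≠ a + p1 := ne_add_one hn a
          refine two_le_sum (u := trip a b (a - p1)) (v := trip (a + p1) a a)
            (Finset.mem_filter.mpr ⟨Finset.mem_univ _, adjA a b c _ hcd⟩)
            (Finset.mem_filter.mpr ⟨Finset.mem_univ _, ?_⟩)
            (trip_ne0 hane) ?_ ?_
          · have : trip a b c = trip a (a + p1) (a + p1) := by rw [hbe, hcE]
            rw [this]
            exact adjC a (a + p1) hane
          · rw [hft, if_pos (Or.inl rfl)]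
          · rw [hft, if_pos (Or.inl (add_sub_cancel'' hn a).symm)]
        · -- swap neighbour
          refine two_le_sum (u := trip a b (a - p1)) (v := trip a c b)
            (Finset.mem_filter.mpr ⟨Finset.mem_univ _, adjA a b c _ hcd⟩)
            (Finset.mem_filter.mpr ⟨Finset.mem_univ _, adjB a b c hbc⟩)
            (trip_ne1 hbc) ?_ ?_
          · rw [hft, if_pos (Or.inl rfl)]
          · rcases Classical.em (b = a - p1) with h | h
            · rw [hft, if_pos (Or.inl h)]
            · have hbe : b = a + p1 := hQ h
              have hce : c ≠ a + p1 := fun hh => hbc (hbe.trans hh.symm)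
              rw [hft, if_pos (Or.inr ⟨hbe, hcd, hce⟩)]
  have hsum : ∑ w, F w = 2 * n * (n - 1) := by
    have hbij : Function.Bijective
        (fun p : Fin n × Fin n × Fin n => trip p.1 p.2.1 p.2.2) := by
      constructor
      · rintro ⟨x1, y1, z1⟩ ⟨x2, y2, z2⟩ h
        have h0 := congrFun h 0; have h1 := congrFun h 1; have h2 := congrFun h 2
        simp only [trip0, trip1, trip2] at h0 h1 h2
        simp only [Prod.mk.injEq]
        exact ⟨h0, h1, h2⟩
      · intro w; exact ⟨(w 0, w 1, w 2), (eq_trip w).symm⟩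
    rw [← Fintype.sum_bijective _ hbij _ F (fun p => rfl)]
    rw [Fintype.sum_prod_type]
    have hne := sub_ne_add hn
    have inner : ∀ a b : Fin n, ∑ c, F (trip a b c) =
        1 + (if b ≠ a - p1 ∧ b ≠ a + p1 then 1 else 0) := by
      intro a b
      have key : ∀ c : Fin n, F (trip a b c) =
          (if c = a - p1 then 1 else 0) +
          (if c = a + p1 ∧ (b ≠ a - p1 ∧ b ≠ a + p1) then 1 else 0) := by
        intro c
        rw [hft]
        have hnotboth : ¬(c = a - p1 ∧ c = a + p1) := fun hh => hne a (hh.1 ▸ hh.2)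
        split_ifs <;> first | rfl | (exfalso; tauto)
      rw [Finset.sum_congr rfl (fun c _ => key c), Finset.sum_add_distrib]
      congr 1
      · rw [Finset.sum_ite_eq' Finset.univ (a - p1) (fun _ => 1),
          if_pos (Finset.mem_univ _)]
      · by_cases hQ : b ≠ a - p1 ∧ b ≠ a + p1
        · rw [if_pos hQ]
          have : ∀ c : Fin n, (if c = a + p1 ∧ (b ≠ a - p1 ∧ b ≠ a + p1) then (1:ℕ) else 0)
              = if c = a + p1 then 1 else 0 := fun c => if_congr (and_iff_left hQ) rfl rfl
          rw [Finset.sum_congr rfl (fun c _ => this c),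
            Finset.sum_ite_eq' Finset.univ (a + p1) (fun _ => 1), if_pos (Finset.mem_univ _)]
        · rw [if_neg hQ]
          have : ∀ c : Fin n, (if c = a + p1 ∧ (b ≠ a - p1 ∧ b ≠ a + p1) then (1:ℕ) else 0)
              = 0 := fun c => if_neg (fun hh => hQ hh.2)
          rw [Finset.sum_congr rfl (fun c _ => this c), Finset.sum_const_zero]
    have middle : ∀ a : Fin n, ∑ q : Fin n × Fin n, F (trip a q.1 q.2) = n + (n - 2) := by
      intro a
      rw [Fintype.sum_prod_type]
      calc ∑ b : Fin n, ∑ c, F (trip a b c)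
          = ∑ b : Fin n, (1 + (if b ≠ a - p1 ∧ b ≠ a + p1 then 1 else 0)) :=
            Finset.sum_congr rfl (fun b _ => inner a b)
        _ = ∑ _b : Fin n, 1 + ∑ b : Fin n, (if b ≠ a - p1 ∧ b ≠ a + p1 then 1 else 0) :=
            Finset.sum_add_distrib
        _ = n + (n - 2) := by
            congr 1
            · rw [Finset.sum_const, Finset.card_univ, Fintype.card_fin, smul_eq_mul, mul_one]
            · rw [Finset.sum_boole]
              have hfil : Finset.univ.filter (fun b : Fin n => b ≠ a - p1 ∧ b ≠ a + p1) =
                  Finset.univ \ {a - p1, a + p1} := by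
                ext x
                simp only [Finset.mem_filter, Finset.mem_univ, true_and, Finset.mem_sdiff,
                  Finset.mem_insert, Finset.mem_singleton, not_or]
              rw [hfil, Finset.card_sdiff_of_subset (Finset.subset_univ _), Finset.card_pair (hne a),
                Finset.card_univ, Fintype.card_fin, Nat.cast_id]
    calc ∑ a : Fin n, ∑ q : Fin n × Fin n, F (trip a q.1 q.2)
        = ∑ _a : Fin n, (n + (n - 2)) := Finset.sum_congr rfl (fun a _ => middle a)
      _ = n * (n + (n - 2)) := by
          rw [Finset.sum_const, Finset.card_univ, Fintype.card_fin, smul_eq_mul]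
      _ = 2 * n * (n - 1) := by
          have h2 : n + (n - 2) = 2 * (n - 1) := by omega
          rw [h2]; ring
  exact ⟨F, fun w => rfl, hIDF, hsum, Nat.sInf_le ⟨F, hIDF, hsum⟩⟩
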